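/- Let π = t_1 ... t_k be a firing sequence of the subnet Σ^{λ(π)}, where λ(π) is the set of labels of transitions in π, and where Σ^{λ(π)} contains all agents whose alphabets intersect λ(π). Assume moreover that for each transition t_i in π, its preset and postset in the full composition Σ coincide with those in Σ^{λ(π)}. Then π (identified with the corresponding transitions of Σ) is a firing sequence of Σ. -/

import Mathlib

/-- A Petri net system: places `P`, transitions `T`, flow relation encoded by
presets and postsets, and an initial marking. -/
structure PetriNet (P T : Type*) where
  pre : T → Set P
  post : T → Set P
  m0 : P → ℕ

namespace PetriNet

variable {P T : Type*}

def enabled (N : PetriNet P T) (m : P → ℕ) (t : T) : Prop :=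
  ∀ p ∈ N.pre t, 1 ≤ m p

open Classical in
noncomputable def fire (N : PetriNet P T) (m : P → ℕ) (t : T) : P → ℕ :=
  fun p =>
    if p ∈ N.pre t ∧ p ∉ N.post t then m p - 1
    else if p ∈ N.post t ∧ p ∉ N.pre t then m p + 1
    else m p

def step (N : PetriNet P T) (m m' : P → ℕ) : Prop :=
  ∃ t, N.enabled m t ∧ m' = N.fire m t

def Reachable (N : PetriNet P T) (m : P → ℕ) : Prop :=
  Relation.ReflTransGen N.step N.m0 m

def OneSafe (N : PetriNet P T) : Prop :=
  ∀ m, N.Reachable m → ∀ p, m p ≤ 1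

/-- `t` is 1-live if some reachable marking enables it. -/
def OneLive (N : PetriNet P T) (t : T) : Prop :=
  ∃ m, N.Reachable m ∧ N.enabled m t

/-- The list of transitions `l` is a firing sequence from marking `m`. -/
def firesFrom (N : PetriNet P T) : (P → ℕ) → List T → Prop
  | _, [] => True
  | m, t :: ts => N.enabled m t ∧ N.firesFrom (N.fire m t) ts

end PetriNet

/-- A state-machine agent net: each transition has a single input place
(its source) and a single output place (its target), and carries a label. -/
structure Agent (Pl Tr Λ : Type*) where
  src : Tr → Pl
  tgt : Tr → Pl
  lab : Tr → Λ
  init : Pl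

namespace Agent

variable {I Λ : Type*} {Pl Tr : I → Type*}

/-- A legal component of a global transition with label `α` in an agent:
either a transition of the agent labelled `α`, or no component when the
agent's alphabet does not contain `α`. -/
def GoodComp {P T : Type*} (A : Agent P T Λ) (α : Λ) : Option T → Prop
  | some t => A.lab t = α
  | none => ¬ ∃ t : T, A.lab t = α

/-- A global transition of the fusion-composition of the agents indexed by
`S`: a label together with, for each participating agent whose alphabet
contains the label, one transition of that agent with this label (and no
component for the other agents). -/
def GTrans (A : ∀ i, Agent (Pl i) (Tr i) Λ) (S : Set I) : Type _ :=
  {q : Λ × (∀ i, Option (Tr i)) //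
    ∀ i, (i ∈ S → (A i).GoodComp q.1 (q.2 i)) ∧ (i ∉ S → q.2 i = none)}

open Classical in
/-- The fusion-composition of the agents indexed by `S`: places are the
(disjoint) places of the agents, transitions are the global transitions,
presets/postsets are the unions of the componentwise ones, and the initial
marking puts one token on each participating agent's initial place. -/
noncomputable def GlobalNet (A : ∀ i, Agent (Pl i) (Tr i) Λ) (S : Set I) :
    PetriNet (Σ i, Pl i) (GTrans A S) where
  pre q := {p : Σ i, Pl i | ∃ t : Tr p.1, q.1.2 p.1 = some t ∧ (A p.1).src t = p.2}
  post q := {p : Σ i, Pl i | ∃ t : Tr p.1, q.1.2 p.1 = some t ∧ (A p.1).tgt t = p.2}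
  m0 := fun p => if p.1 ∈ S ∧ p.2 = (A p.1).init then 1 else 0

/-- The set of agents whose alphabet intersects a set of labels `Λs`. -/
def agentsOf (A : ∀ i, Agent (Pl i) (Tr i) Λ) (Λs : Set Λ) : Set I :=
  {i | ∃ t : Tr i, (A i).lab t ∈ Λs}

open Classical in
/-- The projection of a global transition of the full composition onto the
subnet composed of the agents in `S`: the subtuple of the components
belonging to agents in `S`. -/
noncomputable def projT (A : ∀ i, Agent (Pl i) (Tr i) Λ) (S : Set I)
    (q : GTrans A Set.univ) : GTrans A S :=
  ⟨(q.1.1, fun i => if i ∈ S then q.1.2 i else none), by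
    intro i
    constructor
    · intro hi
      simp only [hi, if_pos]
      exact ((q.2 i).1 (Set.mem_univ i))
    · intro hi
      simp [hi]⟩

open Classical in
/-- The projection of a firing sequence of the full composition onto the
subnet composed of the agents in `S`: transitions with no component in the
agents of `S` are skipped, the rest are restricted to their `S`-components. -/
noncomputable def projSeq (A : ∀ i, Agent (Pl i) (Tr i) Λ) (S : Set I)
    (l : List (GTrans A Set.univ)) : List (GTrans A S) :=
  (l.filter (fun q => decide (∃ i ∈ S, (q.1.2 i).isSome))).map (projT A S)

end Agent

open Agent in
/-- Let `π` be a firing sequence of the subnet `Σ^{λ(π)}` composed of all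
agents whose alphabets intersect the set `λ(π)` of labels of `π`. If the
corresponding transitions of the full composition `Σ` (those projecting to
`π` and having no component outside the chosen agents) have the same presets
and postsets in `Σ` as in `Σ^{λ(π)}`, then they form a firing sequence of
`Σ`. -/
theorem lift_firing_sequence
    {I Λ : Type*} {Pl Tr : I → Type*} (A : ∀ i, Agent (Pl i) (Tr i) Λ)
    (Λs : Set Λ) (πJ : List (GTrans A (agentsOf A Λs)))
    (hlab : Λs = {α | ∃ q ∈ πJ, q.1.1 = α})
    (hfire : (GlobalNet A (agentsOf A Λs)).firesFrom
        (GlobalNet A (agentsOf A Λs)).m0 πJ)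
    (πG : List (GTrans A Set.univ))
    (hproj : πG.map (projT A (agentsOf A Λs)) = πJ)
    (hnone : ∀ q ∈ πG, ∀ i, i ∉ agentsOf A Λs → q.1.2 i = none)
    (hpre : ∀ q ∈ πG,
      (GlobalNet A Set.univ).pre q =
        (GlobalNet A (agentsOf A Λs)).pre (projT A (agentsOf A Λs) q) ∧
      (GlobalNet A Set.univ).post q =
        (GlobalNet A (agentsOf A Λs)).post (projT A (agentsOf A Λs) q)) :
    (GlobalNet A Set.univ).firesFrom (GlobalNet A Set.univ).m0 πG := by
  classical
  set S := agentsOf A Λs with hS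
  -- general induction with arbitrary markings agreeing on S-places
  suffices h : ∀ (l : List (GTrans A Set.univ)) (m mJ : (Σ i, Pl i) → ℕ),
      (∀ p : Σ i, Pl i, p.1 ∈ S → m p = mJ p) →
      (∀ q ∈ l,
        (GlobalNet A Set.univ).pre q = (GlobalNet A S).pre (projT A S q) ∧
        (GlobalNet A Set.univ).post q = (GlobalNet A S).post (projT A S q)) →
      (GlobalNet A S).firesFrom mJ (l.map (projT A S)) →
      (GlobalNet A Set.univ).firesFrom m l by
    refine h πG (GlobalNet A Set.univ).m0 (GlobalNet A S).m0 ?_ hpre ?_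
    · intro p hp
      simp [GlobalNet, hp]
    · rw [hproj]; exact hfire
  intro l
  induction l with
  | nil => intro m mJ _ _ _; trivial
  | cons q l ih =>
    intro m mJ hagree hpp hf
    have hq := hpp q List.mem_cons_self
    -- preset/postset of projected transition lies in S-places
    have hpreS : ∀ p ∈ (GlobalNet A S).pre (projT A S q), p.1 ∈ S := by
      intro p hp
      obtain ⟨t, ht, -⟩ := hp
      by_contra hps
      simp [projT, hps] at ht
    have hpostS : ∀ p ∈ (GlobalNet A S).post (projT A S q), p.1 ∈ S := by
      intro p hp
      obtain ⟨t, ht, -⟩ := hp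
      by_contra hps
      simp [projT, hps] at ht
    rw [List.map_cons] at hf
    obtain ⟨hen, hrest⟩ := hf
    constructor
    · intro p hp
      rw [hq.1] at hp
      rw [hagree p (hpreS p hp)]
      exact hen p hp
    · apply ih _ _ ?_ (fun q' hq' => hpp q' (List.mem_cons_of_mem _ hq')) hrest
      intro p hps
      simp only [PetriNet.fire, hq.1, hq.2, hagree p hps]
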